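/- Let the perceptron with dynamic margin run with accuracy ε = 1/2: a₀ = 0, updates a_{t+1} = a_t + y_k with a_t·y_k ≤ (1/2)‖a_t‖²/t for t ≥ 1, ‖y_k‖ ≤ R, and some unit vector u satisfies u·y_k ≥ γ_d > 0 for all patterns. Then the number t of updates satisfies t ≤ (R²/γ_d²)·(1 + ln t), and consequently t ≤ (1+e^{-1})·(R²/γ_d²)·ln((1+e)·R²/γ_d²). -/

import Mathlib

open scoped InnerProductSpace

set_option maxHeartbeats 1600000 in
theorem pdm_bound_eps_half
    {E : Type*} [NormedAddCommGroup E] [InnerProductSpace ℝ E]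
    {m : ℕ} (y : Fin m → E) (a : ℕ → E) (k : ℕ → Fin m) (u : E)
    (R γd : ℝ)
    (ha0 : a 0 = 0)
    (hupd : ∀ t : ℕ, a (t + 1) = a t + y (k t))
    (hmis : ∀ t : ℕ, 1 ≤ t → ⟪a t, y (k t)⟫_ℝ ≤ (1 / 2) * ‖a t‖ ^ 2 / t)
    (hR : ∀ j, ‖y j‖ ≤ R)
    (hu : ‖u‖ = 1)
    (hγ : γd > 0)
    (hγR : γd ≤ R)
    (hmargin : ∀ j, ⟪u, y j⟫_ℝ ≥ γd) :
    ∀ t : ℕ, 1 ≤ t →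
      ((t : ℝ) ≤ (R ^ 2 / γd ^ 2) * (1 + Real.log t)) ∧
      ((t : ℝ) ≤ (1 + Real.exp (-1)) * (R ^ 2 / γd ^ 2) *
        Real.log ((1 + Real.exp 1) * R ^ 2 / γd ^ 2)) := by
  have hRpos : 0 < R := lt_of_lt_of_le hγ hγR
  -- Lower bound on ⟪u, a t⟫
  have hA : ∀ t : ℕ, (t : ℝ) * γd ≤ ⟪u, a t⟫_ℝ := by
    intro t
    induction t with
    | zero => simp [ha0]
    | succ n ih =>
      rw [hupd, inner_add_right]
      have := hmargin (k n)
      push_cast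
      nlinarith
  -- Upper bound on ‖a t‖ ^ 2
  have hB : ∀ t : ℕ, 1 ≤ t → ‖a t‖ ^ 2 ≤ R ^ 2 * t * (1 + Real.log t) := by
    intro t ht
    induction t with
    | zero => omega
    | succ n ih =>
      rcases Nat.eq_zero_or_pos n with hn | hn
      · subst hn
        rw [hupd, ha0, zero_add]
        have := hR (k 0)
        have hy := norm_nonneg (y (k 0))
        norm_num
        nlinarith
      · have ihn := ih hn
        have hN1 : (1 : ℝ) ≤ (n : ℝ) := by exact_mod_cast hn
        have hNpos : (0 : ℝ) < n := by linarith
        set N := (n : ℝ) with hNdef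
        have hexp : ‖a (n + 1)‖ ^ 2
            = ‖a n‖ ^ 2 + 2 * ⟪a n, y (k n)⟫_ℝ + ‖y (k n)‖ ^ 2 := by
          rw [hupd]
          rw [@norm_add_sq_real]
        have h1 := hmis n hn
        have h1' : 2 * N * ⟪a n, y (k n)⟫_ℝ ≤ ‖a n‖ ^ 2 := by
          have := (le_div_iff₀ hNpos).mp (by simpa using h1)
          nlinarith
        have h2 : ‖y (k n)‖ ^ 2 ≤ R ^ 2 := by
          have := hR (k n)
          have hy := norm_nonneg (y (k n))
          nlinarith
        have hlog : 1 ≤ (N + 1) * (Real.log (N + 1) - Real.log N) := by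
          have hq : (0 : ℝ) < N / (N + 1) := by positivity
          have h := Real.log_le_sub_one_of_pos hq
          rw [Real.log_div (by linarith) (by linarith)] at h
          have hc : N / (N + 1) * (N + 1) = N := div_mul_cancel₀ _ (by linarith)
          nlinarith
        have hlogN : 0 ≤ Real.log N := Real.log_nonneg hN1
        have hR2 : (0 : ℝ) ≤ R ^ 2 := sq_nonneg R
        -- goal: ‖a (n+1)‖^2 ≤ R^2 * (n+1) * (1 + log (n+1))
        have key : ‖a (n + 1)‖ ^ 2 * N ≤ (R ^ 2 * (N + 1) * (1 + Real.log (N + 1))) * N := by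
          have e1 : ‖a n‖ ^ 2 * (N + 1) ≤ R ^ 2 * N * (1 + Real.log N) * (N + 1) := by
            nlinarith
          nlinarith [hexp, h1', e1, mul_le_mul_of_nonneg_right h2 hNpos.le,
            mul_le_mul_of_nonneg_left hlog (mul_nonneg hR2 hNpos.le)]
        have := le_of_mul_le_mul_right key hNpos
        push_cast
        convert this using 2 <;> push_cast <;> ring
    -- end hB
  intro t ht
  have hT1 : (1 : ℝ) ≤ (t : ℝ) := by exact_mod_cast ht
  have hTpos : (0 : ℝ) < t := by linarith
  have hAt := hA t
  have hBt := hB t ht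
  have hcs : ⟪u, a t⟫_ℝ ≤ ‖a t‖ := by
    have := real_inner_le_norm u (a t)
    rwa [hu, one_mul] at this
  have hna : (t : ℝ) * γd ≤ ‖a t‖ := le_trans hAt hcs
  have hsq : ((t : ℝ) * γd) ^ 2 ≤ R ^ 2 * t * (1 + Real.log t) := by
    have h0 : (0 : ℝ) ≤ (t : ℝ) * γd := by positivity
    nlinarith
  have part1 : (t : ℝ) ≤ R ^ 2 / γd ^ 2 * (1 + Real.log t) := by
    rw [div_mul_eq_mul_div, le_div_iff₀ (by positivity)]
    have : ((t : ℝ) * γd ^ 2) * t ≤ (R ^ 2 * (1 + Real.log t)) * t := by nlinarith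
    exact le_of_mul_le_mul_right this hTpos
  refine ⟨part1, ?_⟩
  -- second bound
  obtain ⟨δ, hδdef⟩ : ∃ x : ℝ, x = R ^ 2 / γd ^ 2 := ⟨_, rfl⟩
  have hgoal : (1 + Real.exp 1) * R ^ 2 / γd ^ 2 = (1 + Real.exp 1) * δ := by
    rw [hδdef]; ring
  rw [hgoal, ← hδdef]
  have part1' : (t : ℝ) ≤ δ * (1 + Real.log t) := by rw [hδdef]; exact part1
  have hδ1 : (1 : ℝ) ≤ δ := by
    rw [hδdef, le_div_iff₀ (by positivity)]
    nlinarith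
  have hδpos : (0 : ℝ) < δ := by linarith
  have hepos : (0 : ℝ) < Real.exp 1 := Real.exp_pos 1
  obtain ⟨S, hSdef⟩ : ∃ x : ℝ, x = (1 + Real.exp 1) * δ := ⟨_, rfl⟩
  rw [← hSdef]
  have hSpos : (0 : ℝ) < S := by rw [hSdef]; positivity
  have hlt : Real.log (t : ℝ) ≤ (t : ℝ) / S + Real.log S - 1 := by
    have h := Real.log_le_sub_one_of_pos (show (0 : ℝ) < (t : ℝ) / S by positivity)
    rw [Real.log_div (by linarith) (by linarith)] at h
    linarith
  have hδtS : δ * ((t : ℝ) / S) = (t : ℝ) / (1 + Real.exp 1) := by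
    rw [hSdef]
    field_simp
  have hmain : (t : ℝ) ≤ (t : ℝ) / (1 + Real.exp 1) + δ * Real.log S := by
    have h3 : δ * Real.log (t : ℝ) ≤ δ * ((t : ℝ) / S + Real.log S - 1) :=
      mul_le_mul_of_nonneg_left hlt hδpos.le
    linarith [hδtS, part1']
  have hcanc : (t : ℝ) / (1 + Real.exp 1) * (1 + Real.exp 1) = (t : ℝ) :=
    div_mul_cancel₀ _ (by linarith)
  have h2 : (t : ℝ) * Real.exp 1 ≤ δ * Real.log S * (1 + Real.exp 1) := by
    nlinarith [mul_le_mul_of_nonneg_right hmain (by linarith : (0:ℝ) ≤ 1 + Real.exp 1)]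
  have hrw : (1 + Real.exp (-1)) * δ * Real.log S
      = (δ * Real.log S * (1 + Real.exp 1)) / Real.exp 1 := by
    rw [Real.exp_neg]
    field_simp
    ring
  rw [hrw, le_div_iff₀ hepos]
  exact h2
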